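/- Let K be a field of characteristic zero, ∂ = u ∂/∂x + v ∂/∂y on K[x,y,u,v], extended to the localization B = K[x,y,u,v][u⁻¹]. Then every slice s of ∂ on B satisfies s − x/u ∈ Ker(∂|_B), and Ker(∂|_B) = K[u, u⁻¹, v, xv − yu]. In particular, ∂ has no slice in K[x,y,u,v]. -/

import Mathlib

set_option synthInstance.maxHeartbeats 1000000
set_option maxHeartbeats 1000000

open MvPolynomial

/-- The derivation `u ∂/∂x + v ∂/∂y` on `K[x,y,u,v]`, with `x = X 0`, `y = X 1`,
`u = X 2`, `v = X 3`. -/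
noncomputable def transDerivation (K : Type*) [CommRing K] :
    Derivation K (MvPolynomial (Fin 4) K) (MvPolynomial (Fin 4) K) :=
  MvPolynomial.mkDerivation K ![X 2, X 3, 0, 0]

/-- The canonical map `K[x,y,u,v] → K[x,y,u,v][u⁻¹]`. -/
noncomputable def locMapU (K : Type*) [Field K] :
    MvPolynomial (Fin 4) K →+* Localization.Away (X 2 : MvPolynomial (Fin 4) K) :=
  algebraMap _ _
set_option synthInstance.maxHeartbeats 1000000
set_option maxHeartbeats 1000000

lemma aux_deriv_aeval {K B : Type*} [CommRing K] [CommRing B] [Algebra K B]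
    (D : Derivation K B B) (A : Subalgebra K B) (hA : ∀ a : A, D (a : B) = 0)
    (t : B) (ht : D t = 1) (P : Polynomial A) :
    D (Polynomial.aeval t P) = Polynomial.aeval t (Polynomial.derivative P) := by
  induction P using Polynomial.induction_on with
  | C a =>
      rw [Polynomial.aeval_C, Polynomial.derivative_C, map_zero]
      exact hA a
  | add p q hp hq => rw [map_add, Polynomial.derivative_add, map_add, map_add, hp, hq]
  | monomial n a _ =>
      have h1 : (Polynomial.aeval t) (Polynomial.C a * Polynomial.X ^ (n + 1))
          = (a : B) * t ^ (n + 1) := by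
        simp
      rw [h1, Derivation.leibniz, Derivation.leibniz_pow, ht, hA]
      have h2 : Polynomial.derivative (Polynomial.C a * Polynomial.X ^ (n + 1))
          = Polynomial.C a * (Polynomial.C ((n + 1 : ℕ) : A) * Polynomial.X ^ n) := by
        simp [Polynomial.derivative_C_mul, Polynomial.derivative_X_pow]
      rw [h2]
      simp only [map_mul, Polynomial.aeval_C, map_natCast, Polynomial.aeval_X, map_pow,
        smul_eq_mul, nsmul_eq_mul, smul_zero, mul_zero, add_zero, mul_one]
      rw [show (algebraMap (A : Subalgebra K B) B) a = (a : B) from rfl]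
      push_cast
      ring

lemma aux_trans {K B : Type*} [CommRing K] [CommRing B] [Algebra K B]
    (D : Derivation K B B) (A : Subalgebra K B) (hA : ∀ a : A, D (a : B) = 0)
    (t : B) (ht : D t = 1) [NoZeroSMulDivisors ℕ A] :
    ∀ P : Polynomial A, Polynomial.aeval t P = 0 → P = 0 := by
  suffices H : ∀ (n : ℕ) (P : Polynomial A), P.natDegree ≤ n →
      Polynomial.aeval t P = 0 → P = 0 by
    exact fun P h => H P.natDegree P le_rfl h
  intro n
  induction n with
  | zero =>
      intro P hdeg h0
      have hC := Polynomial.eq_C_of_natDegree_le_zero hdeg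
      rw [hC, Polynomial.aeval_C] at h0
      have hz : P.coeff 0 = 0 := by
        have h0' : ((P.coeff 0 : A) : B) = 0 := h0
        exact_mod_cast h0'
      rw [hC, hz, map_zero]
  | succ n ih =>
      intro P hdeg h0
      have hd : Polynomial.aeval t (Polynomial.derivative P) = 0 := by
        rw [← aux_deriv_aeval D A hA t ht, h0, map_zero]
      by_cases hP0 : P.natDegree = 0
      · exact ih P (by omega) h0
      · have hlt : (Polynomial.derivative P).natDegree < P.natDegree :=
          Polynomial.natDegree_derivative_lt hP0
        have hzero : Polynomial.derivative P = 0 := ih _ (by omega) hd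
        haveI : IsAddTorsionFree A := ⟨fun n hn a b h => by
          have h' : n • (a - b) = 0 := by rw [smul_sub, sub_eq_zero]; exact h
          exact sub_eq_zero.mp ((smul_eq_zero.mp h').resolve_left hn)⟩
        have := Polynomial.natDegree_eq_zero_of_derivative_eq_zero hzero
        omega

/-- Extend `∂ = u ∂/∂x + v ∂/∂y` to `B = K[x,y,u,v][u⁻¹]`.  Every slice `s` of
the extension satisfies `s − x/u ∈ Ker`, the kernel of the extension is
`K[u, u⁻¹, v, xv − yu]`, and `∂` has no slice in `K[x,y,u,v]`. -/
theorem transDerivation_localized_slices (K : Type*) [Field K] [CharZero K]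
    (D : Derivation K (Localization.Away (X 2 : MvPolynomial (Fin 4) K))
          (Localization.Away (X 2 : MvPolynomial (Fin 4) K)))
    (hext : ∀ p : MvPolynomial (Fin 4) K,
      D (locMapU K p) = locMapU K (transDerivation K p)) :
    (∀ s : Localization.Away (X 2 : MvPolynomial (Fin 4) K), D s = 1 →
      D (s - locMapU K (X 0) * Localization.Away.invSelf (X 2)) = 0) ∧
    (∀ q : Localization.Away (X 2 : MvPolynomial (Fin 4) K), D q = 0 ↔
      q ∈ Algebra.adjoin K ({locMapU K (X 2), Localization.Away.invSelf (X 2),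
        locMapU K (X 3), locMapU K (X 0 * X 3 - X 1 * X 2)} :
        Set (Localization.Away (X 2 : MvPolynomial (Fin 4) K)))) ∧
    ¬ ∃ f : MvPolynomial (Fin 4) K, transDerivation K f = 1 := by
  have hmul : locMapU K (X 2) * Localization.Away.invSelf (X 2) = 1 := by
    rw [locMapU, Localization.Away.invSelf, ← Localization.mk_one_eq_algebraMap,
      Localization.mk_mul, mul_one, one_mul]
    exact Localization.mk_self ⟨X 2, Submonoid.mem_powers _⟩
  have hDX : ∀ i : Fin 4, D (locMapU K (X i)) = locMapU K (![X 2, X 3, 0, 0] i) := by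
    intro i
    rw [hext]
    congr 1
    simp [transDerivation]
  have hDx : D (locMapU K (X 0)) = locMapU K (X 2) := by simpa using hDX 0
  have hDu : D (locMapU K (X 2)) = 0 := by simpa using hDX 2
  have hDv : D (locMapU K (X 3)) = 0 := by simpa using hDX 3
  have hDinv : D (Localization.Away.invSelf (X 2) :
      Localization.Away (X 2 : MvPolynomial (Fin 4) K)) = 0 := by
    have h1 : D (locMapU K (X 2) * Localization.Away.invSelf (X 2)) = 0 := by
      rw [hmul]; exact D.map_one_eq_zero
    rw [Derivation.leibniz, hDu] at h1
    have h2 : locMapU K (X 2) * D (Localization.Away.invSelf (X 2)) = 0 := by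
      simpa [smul_eq_mul] using h1
    calc D (Localization.Away.invSelf (X 2) :
          Localization.Away (X 2 : MvPolynomial (Fin 4) K))
        = (locMapU K (X 2) * Localization.Away.invSelf (X 2)) *
            D (Localization.Away.invSelf (X 2)) := by rw [hmul, one_mul]
    _ = Localization.Away.invSelf (X 2) *
          (locMapU K (X 2) * D (Localization.Away.invSelf (X 2))) := by ring
    _ = 0 := by rw [h2, mul_zero]
  have hDt : D (locMapU K (X 0) * Localization.Away.invSelf (X 2)) = 1 := by
    rw [Derivation.leibniz, hDinv, hDx]
    simp only [smul_eq_mul, mul_zero, zero_add, smul_zero]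
    rw [mul_comm]
    exact hmul
  have hDw : D (locMapU K (X 0 * X 3 - X 1 * X 2)) = 0 := by
    rw [hext]
    have h0 : transDerivation K (X 0 * X 3 - X 1 * X 2) = 0 := by
      rw [map_sub, Derivation.leibniz, Derivation.leibniz]
      simp only [transDerivation, MvPolynomial.mkDerivation_X, smul_eq_mul]
      norm_num [Matrix.cons_val_zero, Matrix.cons_val_one, Matrix.cons_val]
      simp only [show (![X 2, X 3, 0, 0] : Fin 4 → MvPolynomial (Fin 4) K) 3 = 0 from rfl,
        show (![X 2, X 3, 0, 0] : Fin 4 → MvPolynomial (Fin 4) K) 2 = 0 from rfl]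
      ring
    rw [h0, map_zero]
  refine ⟨?_, ?_, ?_⟩
  · -- Part 1: slices
    intro s hs
    rw [map_sub, hs, Derivation.leibniz, hDinv, hDx]
    simp only [smul_eq_mul, mul_zero, zero_add, smul_zero]
    rw [mul_comm, hmul, sub_self]
  · -- Part 2: kernel
    have hkerS : ∀ b ∈ Algebra.adjoin K ({locMapU K (X 2), Localization.Away.invSelf (X 2),
        locMapU K (X 3), locMapU K (X 0 * X 3 - X 1 * X 2)} :
        Set (Localization.Away (X 2 : MvPolynomial (Fin 4) K))), D b = 0 := by
      intro b hb
      induction hb using Algebra.adjoin_induction with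
      | mem x hx =>
          rcases hx with rfl | rfl | rfl | rfl
          · exact hDu
          · exact hDinv
          · exact hDv
          · exact hDw
      | algebraMap r => exact D.map_algebraMap r
      | add x y hx hy hx' hy' => rw [map_add, hx', hy', add_zero]
      | mul x y hx hy hx' hy' => rw [Derivation.leibniz, hx', hy']; simp
    haveI hdom : IsDomain (Localization.Away (X 2 : MvPolynomial (Fin 4) K)) := by
      apply IsLocalization.isDomain_localization (M := Submonoid.powers (X 2 : MvPolynomial (Fin 4) K))
      rintro y ⟨n, rfl⟩
      exact mem_nonZeroDivisors_of_ne_zero (pow_ne_zero _ (X_ne_zero _))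
    haveI hchar : CharZero (Localization.Away (X 2 : MvPolynomial (Fin 4) K)) := by
      have hinj : Function.Injective (algebraMap (MvPolynomial (Fin 4) K)
          (Localization.Away (X 2 : MvPolynomial (Fin 4) K))) := by
        apply IsLocalization.injective _ (M := Submonoid.powers (X 2 : MvPolynomial (Fin 4) K))
        rintro y ⟨n, rfl⟩
        exact mem_nonZeroDivisors_of_ne_zero (pow_ne_zero _ (X_ne_zero _))
      exact charZero_of_injective_algebraMap hinj
    intro q
    constructor
    · intro hq
      have hA₀ : ∀ a : (Algebra.adjoin K ({locMapU K (X 2), Localization.Away.invSelf (X 2),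
          locMapU K (X 3), locMapU K (X 0 * X 3 - X 1 * X 2)} :
          Set (Localization.Away (X 2 : MvPolynomial (Fin 4) K)))),
          D (a : Localization.Away (X 2 : MvPolynomial (Fin 4) K)) = 0 :=
        fun a => hkerS a a.2
      set A₀ := Algebra.adjoin K ({locMapU K (X 2), Localization.Away.invSelf (X 2),
          locMapU K (X 3), locMapU K (X 0 * X 3 - X 1 * X 2)} :
          Set (Localization.Away (X 2 : MvPolynomial (Fin 4) K))) with hA₀def
      set t : Localization.Away (X 2 : MvPolynomial (Fin 4) K) :=
        locMapU K (X 0) * Localization.Away.invSelf (X 2) with htdef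
      have hSsub : ∀ s ∈ ({locMapU K (X 2), Localization.Away.invSelf (X 2),
          locMapU K (X 3), locMapU K (X 0 * X 3 - X 1 * X 2)} :
          Set (Localization.Away (X 2 : MvPolynomial (Fin 4) K))),
          s ∈ Algebra.adjoin (A₀ : Type _) ({t} : Set _) := by
        intro s hs
        have hmem : s ∈ A₀ := Algebra.subset_adjoin hs
        exact (Algebra.adjoin (A₀ : Type _) ({t} : Set _)).algebraMap_mem (⟨s, hmem⟩ : A₀)
      have htT : t ∈ Algebra.adjoin (A₀ : Type _) ({t} : Set _) :=
        Algebra.self_mem_adjoin_singleton _ _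
      have hinvT : (Localization.Away.invSelf (X 2) :
          Localization.Away (X 2 : MvPolynomial (Fin 4) K)) ∈
          Algebra.adjoin (A₀ : Type _) ({t} : Set _) := hSsub _ (by simp)
      have hXT : ∀ i : Fin 4, locMapU K (X i) ∈ Algebra.adjoin (A₀ : Type _) ({t} : Set _) := by
        intro i
        fin_cases i
        · have hx0 : locMapU K (X 0) = t * locMapU K (X 2) := by
            rw [htdef]
            calc locMapU K (X 0) = locMapU K (X 0) * (locMapU K (X 2) *
                  Localization.Away.invSelf (X 2)) := by rw [hmul, mul_one]
            _ = locMapU K (X 0) * Localization.Away.invSelf (X 2) * locMapU K (X 2) := by ring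
          rw [show ((⟨0, by norm_num⟩ : Fin 4) : Fin 4) = 0 from rfl, hx0]
          exact mul_mem htT (hSsub _ (by simp))
        · have hwmem : locMapU K (X 0 * X 3 - X 1 * X 2) ∈ A₀ :=
            Algebra.subset_adjoin (by simp)
          have hnegmem : -(locMapU K (X 0 * X 3 - X 1 * X 2)) ∈ A₀ := neg_mem hwmem
          have hnegT : -(locMapU K (X 0 * X 3 - X 1 * X 2)) ∈
              Algebra.adjoin (A₀ : Type _) ({t} : Set _) :=
            (Algebra.adjoin (A₀ : Type _) ({t} : Set _)).algebraMap_mem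
              (⟨-(locMapU K (X 0 * X 3 - X 1 * X 2)), hnegmem⟩ : A₀)
          have hx1 : locMapU K (X 1) = t * locMapU K (X 3) +
              (-(locMapU K (X 0 * X 3 - X 1 * X 2))) * Localization.Away.invSelf (X 2) := by
            rw [htdef, map_sub, map_mul, map_mul]
            linear_combination (-(locMapU K (X 1)) :
              Localization.Away (X 2 : MvPolynomial (Fin 4) K)) * hmul
          rw [show ((⟨1, by norm_num⟩ : Fin 4) : Fin 4) = 1 from rfl, hx1]
          exact add_mem (mul_mem htT (hSsub _ (by simp)))
            (mul_mem hnegT hinvT)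
        · exact hSsub _ (by simp)
        · exact hSsub _ (by simp)
      have hpoly : ∀ p : MvPolynomial (Fin 4) K,
          locMapU K p ∈ Algebra.adjoin (A₀ : Type _) ({t} : Set _) := by
        intro p
        induction p using MvPolynomial.induction_on with
        | C k =>
            have hk : locMapU K (C k) = algebraMap K
                (Localization.Away (X 2 : MvPolynomial (Fin 4) K)) k := by
              rw [locMapU, ← MvPolynomial.algebraMap_eq, ← IsScalarTower.algebraMap_apply]
            rw [hk, IsScalarTower.algebraMap_apply K A₀
              (Localization.Away (X 2 : MvPolynomial (Fin 4) K))]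
            exact Subalgebra.algebraMap_mem _ _
        | add p q hp hq => rw [map_add]; exact add_mem hp hq
        | mul_X p i hp => rw [map_mul]; exact mul_mem hp (hXT i)
      obtain ⟨⟨p, ⟨u, ⟨n, rfl⟩⟩⟩, hsec⟩ := IsLocalization.surj
        (Submonoid.powers (X 2 : MvPolynomial (Fin 4) K)) q
      have hq' : q = locMapU K p * (Localization.Away.invSelf (X 2)) ^ n := by
        have h2 : locMapU K (X 2) ^ n * (Localization.Away.invSelf (X 2)) ^ n = 1 := by
          rw [← mul_pow, hmul, one_pow]
        calc q = q * (locMapU K (X 2) ^ n * (Localization.Away.invSelf (X 2)) ^ n) := by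
              rw [h2, mul_one]
        _ = q * locMapU K (X 2 ^ n) * (Localization.Away.invSelf (X 2)) ^ n := by
              rw [map_pow]; ring
        _ = locMapU K p * (Localization.Away.invSelf (X 2)) ^ n := by
              dsimp only at hsec
              show q * algebraMap (MvPolynomial (Fin 4) K)
                  (Localization.Away (X 2 : MvPolynomial (Fin 4) K)) (X 2 ^ n) *
                  (Localization.Away.invSelf (X 2)) ^ n =
                algebraMap (MvPolynomial (Fin 4) K)
                  (Localization.Away (X 2 : MvPolynomial (Fin 4) K)) p *
                  (Localization.Away.invSelf (X 2)) ^ n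
              rw [hsec]
      have hqT : q ∈ Algebra.adjoin (A₀ : Type _) ({t} : Set _) := by
        rw [hq']
        exact mul_mem (hpoly p) (pow_mem hinvT n)
      rw [Algebra.adjoin_singleton_eq_range_aeval] at hqT
      obtain ⟨P, hP⟩ := (AlgHom.mem_range _).mp hqT
      have hd : Polynomial.aeval t (Polynomial.derivative P) = 0 := by
        rw [← aux_deriv_aeval D A₀ hA₀ t hDt, hP, hq]
      have hz : Polynomial.derivative P = 0 := aux_trans D A₀ hA₀ t hDt _ hd
      have hC : P = Polynomial.C (P.coeff 0) := Polynomial.eq_C_of_derivative_eq_zero hz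
      rw [hC, Polynomial.aeval_C] at hP
      rw [← hP]
      exact (P.coeff 0).2
    · intro hq
      exact hkerS q hq
  · -- Part 3: no polynomial slice
    have hspan : ∀ p : MvPolynomial (Fin 4) K,
        transDerivation K p ∈ Ideal.span {(X 2 : MvPolynomial (Fin 4) K), X 3} := by
      intro p
      induction p using MvPolynomial.induction_on with
      | C k =>
          rw [show (C k : MvPolynomial (Fin 4) K) = algebraMap K _ k from rfl,
            Derivation.map_algebraMap]
          exact Ideal.zero_mem _
      | add p q hp hq => rw [map_add]; exact Ideal.add_mem _ hp hq
      | mul_X p i hp =>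
          rw [Derivation.leibniz]
          simp only [smul_eq_mul]
          apply Ideal.add_mem
          · apply Ideal.mul_mem_left
            have hXi : transDerivation K (X i) = ![X 2, X 3, 0, 0] i := by
              simp [transDerivation]
            rw [hXi]
            fin_cases i
            · exact Ideal.subset_span (by simp)
            · exact Ideal.subset_span (by simp)
            · simpa using Ideal.zero_mem (Ideal.span {(X 2 : MvPolynomial (Fin 4) K), X 3})
            · simpa using Ideal.zero_mem (Ideal.span {(X 2 : MvPolynomial (Fin 4) K), X 3})
          · exact Ideal.mul_mem_left _ _ hp
    rintro ⟨f, hf⟩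
    have h1 : (1 : MvPolynomial (Fin 4) K) ∈
        Ideal.span {(X 2 : MvPolynomial (Fin 4) K), X 3} := by
      rw [← hf]; exact hspan f
    rw [Ideal.mem_span_pair] at h1
    obtain ⟨a, b, hab⟩ := h1
    have hev := congrArg (MvPolynomial.eval (fun _ : Fin 4 => (0 : K))) hab
    simp at hev
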